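/- arXiv:quant-ph/0506054 — 2 statements merged into one kernel-verified Lean document; each statement's English description precedes it below -/
import Mathlib

section
/- Let p be an odd prime and let U, ψ, X̃_i, Z̃_i be as follows: ξ_1,…,ξ_n,η_1,…,η_n is a hyperbolic basis of (ZMod p)^{2n}; θx(i), θz(i) are powers of ω; X̃_i = θx(i)·XZⁿ(η_i), Z̃_i = θz(i)·XZⁿ(ξ_i); X̃(u) = Π_{i=1}^n X̃_i^{u_i}; ψ is a unit vector with Z̃_i·ψ = ψ for all i; and U is a unitary matrix indexed by (ZMod p)^n with U·δ_u = X̃(u)·ψ for all u ∈ (ZMod p)^n. Then U normalizes the Pauli group: for every j ∈ ℕ and every v ∈ (ZMod p)^{2n} there exist j' ∈ ℕ and v' ∈ (ZMod p)^{2n} such that U·(ω^j·XZⁿ(v))·U* = ω^{j'}·XZⁿ(v'). -/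
open scoped BigOperators

/-- The phase space `(ZMod p)^n × (ZMod p)^n`, representing `(ZMod p)^{2n}`
written as pairs `(a|b)`. -/
abbrev PV (p n : ℕ) := (Fin n → ZMod p) × (Fin n → ZMod p)

/-- The symplectic inner product `⟨x,y⟩ = ∑ i, (b i * c i - a i * d i)`
for `x = (a|b)`, `y = (c|d)`. -/
def symp {p n : ℕ} (x y : PV p n) : ZMod p :=
  ∑ i, (x.2 i * y.1 i - x.1 i * y.2 i)

/-- `ξ_1,…,ξ_n, η_1,…,η_n` form a hyperbolic basis of `(ZMod p)^{2n}`. -/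
def IsHyperbolicBasis {p n : ℕ} (ξ η : Fin n → PV p n) : Prop :=
  LinearIndependent (ZMod p) (Sum.elim ξ η) ∧
  Submodule.span (ZMod p) (Set.range (Sum.elim ξ η)) = ⊤ ∧
  (∀ i j, symp (ξ i) (η j) = if i = j then 1 else 0) ∧
  (∀ i j, symp (ξ i) (ξ j) = 0) ∧
  (∀ i j, symp (η i) (η j) = 0)

/-- Symplectic orthogonal complement `W^⊥` of a submodule `W`. -/
def sympOrtho {p n : ℕ} (W : Submodule (ZMod p) (PV p n)) :
    Submodule (ZMod p) (PV p n) where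
  carrier := {y | ∀ x ∈ W, symp x y = 0}
  zero_mem' := by intro x hx; simp [symp]
  add_mem' := by
    intro a b ha hb x hx
    have h : symp x (a + b) = symp x a + symp x b := by
      unfold symp
      rw [← Finset.sum_add_distrib]
      refine Finset.sum_congr rfl ?_
      intro i _
      simp only [Prod.fst_add, Prod.snd_add, Pi.add_apply]
      ring
    rw [h, ha x hx, hb x hx, add_zero]
  smul_mem' := by
    intro c a ha x hx
    have h : symp x (c • a) = c * symp x a := by
      unfold symp
      rw [Finset.mul_sum]
      refine Finset.sum_congr rfl ?_
      intro i _
      simp only [Prod.smul_fst, Prod.smul_snd, Pi.smul_apply, smul_eq_mul]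
      ring
    rw [h, ha x hx, mul_zero]

/-- `ω = exp(2πi/p)`. -/
noncomputable def omg (p : ℕ) : ℂ := Complex.exp (2 * Real.pi * Complex.I / p)

/-- The matrix `XZⁿ(v)` for `v = (a|b)`: entry `(r,c)` equals `ω^{b·c}`
if `r = c + a`, and `0` otherwise. -/
noncomputable def XZ {p n : ℕ} (v : PV p n) :
    Matrix (Fin n → ZMod p) (Fin n → ZMod p) ℂ :=
  fun r c => if r = c + v.1 then omg p ^ (∑ i, v.2 i * c i).val else 0

/-- The standard basis vector `δ_u`. -/
def delta {p n : ℕ} (u : Fin n → ZMod p) : (Fin n → ZMod p) → ℂ :=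
  fun v => if v = u then 1 else 0

/-- Ordered product `∏_{i=1}^n (M i)^{u_i}` of matrices, powers via integer lifts. -/
noncomputable def prodPow {p n : ℕ} [NeZero p]
    (M : Fin n → Matrix (Fin n → ZMod p) (Fin n → ZMod p) ℂ)
    (u : Fin n → ZMod p) : Matrix (Fin n → ZMod p) (Fin n → ZMod p) ℂ :=
  ((List.finRange n).map (fun i => (M i) ^ (u i).val)).prod

/-- Splice `e ∈ (ZMod p)^{n-k}` and `x ∈ (ZMod p)^k` into a vector of `(ZMod p)^n`,
identifying `(ZMod p)^n` with `(ZMod p)^{n-k} × (ZMod p)^k`. -/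
def splice {p n k : ℕ} (hk : k ≤ n) (e : Fin (n - k) → ZMod p)
    (x : Fin k → ZMod p) : Fin n → ZMod p :=
  fun i => Fin.append e x (Fin.cast (by omega) i)

/-- The index `n - k + i` of `Fin n`, for `i : Fin k`. -/
def lastIdx {n k : ℕ} (hk : k ≤ n) (i : Fin k) : Fin n :=
  ⟨n - k + i.1, by have := i.2; omega⟩

/-- Kronecker (tensor) product of two vectors. -/
def vecKron {ι : Type*} (f g : ι → ℂ) : ι × ι → ℂ := fun q => f q.1 * g q.2

/-- Entrywise complex conjugate of a vector. -/
def conjVec {ι : Type*} (f : ι → ℂ) : ι → ℂ := fun i => (starRingEnd ℂ) (f i)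

/-! ### Auxiliary lemmas -/

section Aux

variable {p n : ℕ}

lemma omg_pow_p (hp : p ≠ 0) : omg p ^ p = 1 := by
  unfold omg
  rw [← Complex.exp_nat_mul]
  have hpc : (p : ℂ) ≠ 0 := Nat.cast_ne_zero.mpr hp
  rw [show (p : ℂ) * (2 * Real.pi * Complex.I / p) = 2 * Real.pi * Complex.I by
    field_simp]
  exact Complex.exp_two_pi_mul_I

lemma omg_pow_mod (hp : p ≠ 0) (a : ℕ) : omg p ^ a = omg p ^ (a % p) := by
  conv_lhs => rw [← Nat.div_add_mod a p]
  rw [pow_add, pow_mul, omg_pow_p hp, one_pow, one_mul]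

lemma omg_val_add [NeZero p] (x y : ZMod p) :
    omg p ^ (x + y).val = omg p ^ x.val * omg p ^ y.val := by
  rw [ZMod.val_add, ← omg_pow_mod (NeZero.ne p), pow_add]

lemma XZ_zero [NeZero p] : XZ (0 : PV p n) = 1 := by
  ext r c
  simp [XZ, Matrix.one_apply]

lemma XZ_mul [NeZero p] (v w : PV p n) :
    XZ v * XZ w = omg p ^ (∑ i, v.2 i * w.1 i).val • XZ (v + w) := by
  ext r c
  simp only [XZ, Matrix.mul_apply, Matrix.smul_apply, smul_eq_mul]
  rw [Finset.sum_eq_single_of_mem (c + w.1) (Finset.mem_univ _)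
      (fun t _ ht => by rw [if_neg ht, mul_zero])]
  rw [if_pos rfl]
  by_cases h : r = c + w.1 + v.1
  · rw [if_pos h, if_pos (by rw [h, Prod.fst_add]; abel)]
    have hE : (∑ i, v.2 i * (c + w.1) i) + (∑ i, w.2 i * c i)
        = (∑ i, v.2 i * w.1 i) + (∑ i, (v + w).2 i * c i) := by
      rw [← Finset.sum_add_distrib, ← Finset.sum_add_distrib]
      refine Finset.sum_congr rfl fun i _ => ?_
      simp only [Prod.snd_add, Pi.add_apply]
      ring
    rw [← omg_val_add, ← omg_val_add, hE]
  · rw [if_neg h, zero_mul, if_neg (fun hc => h (by rw [hc, Prod.fst_add]; abel)),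
      mul_zero]

lemma XZ_comm [NeZero p] (v w : PV p n) :
    XZ v * XZ w = omg p ^ (symp v w).val • (XZ w * XZ v) := by
  rw [XZ_mul, XZ_mul, add_comm w v, smul_smul, ← omg_val_add]
  have hE : symp v w + ∑ i, w.2 i * v.1 i = ∑ i, v.2 i * w.1 i := by
    unfold symp
    rw [← Finset.sum_add_distrib]
    refine Finset.sum_congr rfl fun i _ => ?_
    ring
  rw [hE]

lemma XZ_pow [NeZero p] (v : PV p n) (k : ℕ) :
    XZ v ^ k
      = omg p ^ (((k.choose 2 : ℕ) : ZMod p) * ∑ i, v.2 i * v.1 i).val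
        • XZ ((k : ZMod p) • v) := by
  induction k with
  | zero => simp [XZ_zero]
  | succ k ih =>
    rw [pow_succ', ih, Matrix.mul_smul, XZ_mul, smul_smul, ← omg_val_add]
    have hv : v + (k : ZMod p) • v = ((k : ℕ) + 1 : ZMod p) • v := by
      rw [add_smul, one_smul, add_comm]
    have hE : (((k.choose 2 : ℕ) : ZMod p) * ∑ i, v.2 i * v.1 i)
          + (∑ i, v.2 i * ((k : ZMod p) • v).1 i)
        = (((k + 1).choose 2 : ℕ) : ZMod p) * ∑ i, v.2 i * v.1 i := by
      have h2 : (∑ i, v.2 i * ((k : ZMod p) • v).1 i)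
          = (k : ZMod p) * ∑ i, v.2 i * v.1 i := by
        rw [Finset.mul_sum]
        refine Finset.sum_congr rfl fun i _ => ?_
        simp only [Prod.smul_fst, Pi.smul_apply, smul_eq_mul]
        ring
      rw [h2, show (k + 1).choose 2 = k.choose 2 + k from by
        rw [show k + 1 = k.succ from rfl, Nat.choose_succ_succ, Nat.choose_one_right,
          add_comm]]
      push_cast
      ring
    rw [hE, hv]
    norm_cast

lemma XZ_pow_p [Fact p.Prime] (hodd : Odd p) (v : PV p n) : XZ v ^ p = 1 := by
  have hp : p.Prime := Fact.out
  rw [XZ_pow]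
  have h2 : ((p.choose 2 : ℕ) : ZMod p) = 0 := by
    rw [ZMod.natCast_eq_zero_iff]
    exact hp.dvd_choose_self (by norm_num)
      (lt_of_le_of_ne hp.two_le (by rintro rfl; exact absurd hodd (by decide)))
  have hpz : ((p : ℕ) : ZMod p) = 0 := ZMod.natCast_self p
  rw [h2, zero_mul, ZMod.val_zero, pow_zero, one_smul, hpz, zero_smul, XZ_zero]

lemma symp_add_left {x y z : PV p n} : symp (x + y) z = symp x z + symp y z := by
  unfold symp
  rw [← Finset.sum_add_distrib]
  refine Finset.sum_congr rfl fun i _ => ?_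
  simp only [Prod.fst_add, Prod.snd_add, Pi.add_apply]
  ring

lemma symp_smul_left {c : ZMod p} {x y : PV p n} : symp (c • x) y = c * symp x y := by
  unfold symp
  rw [Finset.mul_sum]
  refine Finset.sum_congr rfl fun i _ => ?_
  simp only [Prod.smul_fst, Prod.smul_snd, Pi.smul_apply, smul_eq_mul]
  ring

lemma symp_add_right {x y z : PV p n} : symp x (y + z) = symp x y + symp x z := by
  unfold symp
  rw [← Finset.sum_add_distrib]
  refine Finset.sum_congr rfl fun i _ => ?_
  simp only [Prod.fst_add, Prod.snd_add, Pi.add_apply]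
  ring

lemma symp_smul_right {c : ZMod p} {x y : PV p n} : symp x (c • y) = c * symp x y := by
  unfold symp
  rw [Finset.mul_sum]
  refine Finset.sum_congr rfl fun i _ => ?_
  simp only [Prod.smul_fst, Prod.smul_snd, Pi.smul_apply, smul_eq_mul]
  ring

lemma symp_zero_left {y : PV p n} : symp (0 : PV p n) y = 0 := by
  unfold symp; simp

lemma symp_zero_right {x : PV p n} : symp x (0 : PV p n) = 0 := by
  unfold symp; simp

lemma symp_sum_left {ι : Type*} (s : Finset ι) (f : ι → PV p n) (y : PV p n) :
    symp (∑ i ∈ s, f i) y = ∑ i ∈ s, symp (f i) y := by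
  classical
  induction s using Finset.induction with
  | empty => simp [symp_zero_left]
  | insert _ _ hns ih =>
    rw [Finset.sum_insert hns, Finset.sum_insert hns, symp_add_left, ih]

lemma symp_sum_right {ι : Type*} (s : Finset ι) (f : ι → PV p n) (x : PV p n) :
    symp x (∑ i ∈ s, f i) = ∑ i ∈ s, symp x (f i) := by
  classical
  induction s using Finset.induction with
  | empty => simp [symp_zero_right]
  | insert _ _ hns ih =>
    rw [Finset.sum_insert hns, Finset.sum_insert hns, symp_add_right, ih]

lemma mulVec_delta [NeZero p] (A : Matrix (Fin n → ZMod p) (Fin n → ZMod p) ℂ)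
    (u : Fin n → ZMod p) : A.mulVec (delta u) = fun r => A r u := by
  funext r
  simp [Matrix.mulVec, dotProduct, delta, mul_ite, Finset.sum_ite_eq']

lemma matrix_col_ext [NeZero p] {A B : Matrix (Fin n → ZMod p) (Fin n → ZMod p) ℂ}
    (h : ∀ u, A.mulVec (delta u) = B.mulVec (delta u)) : A = B := by
  ext r c
  have := congrFun (h c) r
  rwa [mulVec_delta, mulVec_delta] at this

lemma XZ_X_mulVec_delta [NeZero p] (a u : Fin n → ZMod p) :
    (XZ ((a, 0) : PV p n)).mulVec (delta u) = delta (u + a) := by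
  rw [mulVec_delta]
  funext r
  simp [XZ, delta]

lemma XZ_Z_mulVec_delta [NeZero p] (b u : Fin n → ZMod p) :
    (XZ ((0, b) : PV p n)).mulVec (delta u)
      = omg p ^ (∑ i, b i * u i).val • delta u := by
  rw [mulVec_delta]
  funext r
  simp only [XZ, delta, Pi.smul_apply, smul_eq_mul, add_zero]
  by_cases h : r = u
  · simp [h]
  · simp [h]

lemma pow_eq_pow_mod_of_pow_eq_one {Mo : Type*} [Monoid Mo] {A : Mo}
    (h : A ^ p = 1) (a : ℕ) : A ^ a = A ^ (a % p) := by
  conv_lhs => rw [← Nat.div_add_mod a p]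
  rw [pow_add, pow_mul, h, one_pow, one_mul]

lemma list_prod_mul {Mo : Type*} [Monoid Mo] {ι : Type*} (l : List ι) (f g : ι → Mo)
    (h : ∀ i ∈ l, ∀ j ∈ l, Commute (g i) (f j)) :
    (l.map (fun i => f i * g i)).prod = (l.map f).prod * (l.map g).prod := by
  induction l with
  | nil => simp
  | cons a t ih =>
    simp only [List.map_cons, List.prod_cons]
    rw [ih (fun i hi j hj => h i (List.mem_cons_of_mem _ hi) j (List.mem_cons_of_mem _ hj))]
    have hc : Commute (g a) ((t.map f).prod) := by
      refine Commute.list_prod_right _ _ fun x hx => ?_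
      obtain ⟨j, hj, rfl⟩ := List.mem_map.mp hx
      exact h a List.mem_cons_self j (List.mem_cons_of_mem _ hj)
    rw [mul_assoc, mul_assoc, ← mul_assoc (g a), hc.eq, mul_assoc, ← mul_assoc]

lemma prodPow_add [NeZero p]
    (M : Fin n → Matrix (Fin n → ZMod p) (Fin n → ZMod p) ℂ)
    (hcomm : ∀ i j, Commute (M i) (M j)) (horder : ∀ i, M i ^ p = 1)
    (u a : Fin n → ZMod p) :
    prodPow M (u + a) = prodPow M a * prodPow M u := by
  unfold prodPow
  rw [← list_prod_mul _ _ _ fun i _ j _ => (hcomm i j).pow_pow _ _]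
  refine congrArg _ (List.map_congr_left fun i _ => ?_)
  rw [Pi.add_apply, ZMod.val_add, ← pow_eq_pow_mod_of_pow_eq_one (horder i),
    pow_add, ((Commute.refl (M i)).pow_pow _ _).eq]

lemma prodPow_fix [NeZero p]
    (M : Fin n → Matrix (Fin n → ZMod p) (Fin n → ZMod p) ℂ)
    (ψ : (Fin n → ZMod p) → ℂ) (h : ∀ i, (M i).mulVec ψ = ψ)
    (u : Fin n → ZMod p) : (prodPow M u).mulVec ψ = ψ := by
  have hpow : ∀ i k, ((M i) ^ k).mulVec ψ = ψ := by
    intro i k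
    induction k with
    | zero => simp [Matrix.one_mulVec]
    | succ k ih => rw [pow_succ, ← Matrix.mulVec_mulVec, h, ih]
  unfold prodPow
  induction (List.finRange n) with
  | nil => simp [Matrix.one_mulVec]
  | cons a t ih =>
    simp only [List.map_cons, List.prod_cons]
    rw [← Matrix.mulVec_mulVec, ih, hpow]

lemma pauli_mul [NeZero p] {A B : Matrix (Fin n → ZMod p) (Fin n → ZMod p) ℂ}
    {v w : PV p n} {m1 m2 : ℕ}
    (hA : A = omg p ^ m1 • XZ v) (hB : B = omg p ^ m2 • XZ w) :
    ∃ m : ℕ, A * B = omg p ^ m • XZ (v + w) := by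
  refine ⟨m1 + m2 + (∑ i, v.2 i * w.1 i).val, ?_⟩
  rw [hA, hB, Matrix.smul_mul, Matrix.mul_smul, XZ_mul, smul_smul, smul_smul,
    ← pow_add, ← pow_add]

lemma pauli_pow_single [NeZero p] (c : ℂ) (x : PV p n) {mc : ℕ}
    (hc : c = omg p ^ mc) (k : ℕ) :
    (c • XZ x) ^ k
      = omg p ^ (mc * k + ((((k.choose 2 : ℕ) : ZMod p) * ∑ i, x.2 i * x.1 i)).val)
        • XZ ((k : ZMod p) • x) := by
  rw [smul_pow, hc, ← pow_mul, XZ_pow, smul_smul, ← pow_add]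

lemma prodPow_structure [NeZero p] (θ : Fin n → ℂ) (w : Fin n → PV p n)
    (hθ : ∀ i, ∃ m : ℕ, θ i = omg p ^ m) (u : Fin n → ZMod p) :
    ∃ m : ℕ, prodPow (fun i => θ i • XZ (w i)) u
      = omg p ^ m • XZ (∑ i, u i • w i) := by
  rw [Fin.sum_univ_def]
  unfold prodPow
  induction (List.finRange n) with
  | nil => exact ⟨0, by simp [XZ_zero]⟩
  | cons a t ih =>
    obtain ⟨m, hm⟩ := ih
    obtain ⟨ma, hma⟩ := hθ a
    have hhead : (θ a • XZ (w a)) ^ (u a).val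
        = omg p ^ (ma * (u a).val
            + (((((u a).val.choose 2 : ℕ) : ZMod p) * ∑ i, (w a).2 i * (w a).1 i)).val)
          • XZ (u a • w a) := by
      rw [pauli_pow_single (θ a) (w a) hma, ZMod.natCast_val, ZMod.cast_id]
    simp only [List.map_cons, List.prod_cons, List.sum_cons]
    exact pauli_mul hhead hm

end Aux

/-- the encoding operator `U` constructed from a hyperbolic basis
normalizes the Pauli group. -/
theorem stmt6 (p n : ℕ) [Fact p.Prime] (hodd : Odd p)
    (ξ η : Fin n → PV p n) (hb : IsHyperbolicBasis ξ η)
    (θx θz : Fin n → ℂ)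
    (hθx : ∀ i, ∃ m : ℕ, θx i = omg p ^ m)
    (hθz : ∀ i, ∃ m : ℕ, θz i = omg p ^ m)
    (ψ : (Fin n → ZMod p) → ℂ)
    (hψnorm : ∑ v, Complex.normSq (ψ v) = 1)
    (hψ : ∀ i, (θz i • XZ (ξ i)).mulVec ψ = ψ)
    (U : Matrix (Fin n → ZMod p) (Fin n → ZMod p) ℂ)
    (hU : U * U.conjTranspose = 1 ∧ U.conjTranspose * U = 1)
    (hUdef : ∀ u : Fin n → ZMod p,
      U.mulVec (delta u) = (prodPow (fun i => θx i • XZ (η i)) u).mulVec ψ) :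
    ∀ (j : ℕ) (v : PV p n), ∃ (j' : ℕ) (v' : PV p n),
      U * (omg p ^ j • XZ v) * U.conjTranspose = omg p ^ j' • XZ v' := by
  haveI : NeZero p := ⟨(Fact.out : p.Prime).ne_zero⟩
  obtain ⟨-, -, hξη, hξξ, hηη⟩ := hb
  set Mx : Fin n → Matrix (Fin n → ZMod p) (Fin n → ZMod p) ℂ :=
    fun i => θx i • XZ (η i) with hMxdef
  set Mz : Fin n → Matrix (Fin n → ZMod p) (Fin n → ZMod p) ℂ :=
    fun i => θz i • XZ (ξ i) with hMzdef
  -- pairwise commutation of the Mx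
  have hXZcommη : ∀ i j, XZ (η i) * XZ (η j) = XZ (η j) * XZ (η i) := by
    intro i j
    rw [XZ_comm, hηη, ZMod.val_zero, pow_zero, one_smul]
  have hcommMx : ∀ i j, Commute (Mx i) (Mx j) := by
    intro i j
    show Mx i * Mx j = Mx j * Mx i
    simp only [hMxdef]
    rw [Matrix.smul_mul, Matrix.mul_smul, Matrix.smul_mul, Matrix.mul_smul,
      smul_smul, smul_smul, mul_comm (θx j) (θx i), hXZcommη]
  have hordMx : ∀ i, Mx i ^ p = 1 := by
    intro i
    obtain ⟨m, hm⟩ := hθx i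
    simp only [hMxdef]
    rw [smul_pow, hm, ← pow_mul, mul_comm m p, pow_mul, omg_pow_p (NeZero.ne p),
      one_pow, XZ_pow_p hodd, one_smul]
  -- conjugation of the X generators
  have F1 : ∀ a : Fin n → ZMod p,
      U * XZ ((a, 0) : PV p n) = prodPow Mx a * U := by
    intro a
    apply matrix_col_ext
    intro u
    rw [← Matrix.mulVec_mulVec, ← Matrix.mulVec_mulVec, XZ_X_mulVec_delta,
      hUdef, hUdef, Matrix.mulVec_mulVec, prodPow_add Mx hcommMx hordMx u a]
  -- ψ is fixed by the Z generators
  have F0 : ∀ b : Fin n → ZMod p, (prodPow Mz b).mulVec ψ = ψ :=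
    prodPow_fix Mz ψ hψ
  -- bilinearity computation
  have Sbil : ∀ b u : Fin n → ZMod p,
      symp (∑ i, b i • ξ i) (∑ j, u j • η j) = ∑ i, b i * u i := by
    intro b u
    rw [symp_sum_left]
    refine Finset.sum_congr rfl fun i _ => ?_
    rw [symp_smul_left, symp_sum_right]
    have h1 : ∀ j, symp (ξ i) (u j • η j) = if i = j then u j else 0 := by
      intro j
      rw [symp_smul_right, hξη]
      by_cases h : i = j <;> simp [h]
    simp only [h1, Finset.sum_ite_eq, Finset.mem_univ, if_true]
  -- the commutation between prodPow Mz b and prodPow Mx u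
  have key : ∀ b u : Fin n → ZMod p,
      prodPow Mz b * prodPow Mx u
        = omg p ^ (∑ i, b i * u i).val • (prodPow Mx u * prodPow Mz b) := by
    intro b u
    obtain ⟨m1, h1⟩ := prodPow_structure θz ξ hθz b
    obtain ⟨m2, h2⟩ := prodPow_structure θx η hθx u
    rw [hMzdef, hMxdef, h1, h2, Matrix.smul_mul, Matrix.mul_smul, Matrix.smul_mul,
      Matrix.mul_smul, smul_smul, smul_smul, smul_smul,
      XZ_comm (∑ i, b i • ξ i) (∑ j, u j • η j), Sbil b u, smul_smul]
    congr 1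
    ring
  -- conjugation of the Z generators
  have F2 : ∀ b : Fin n → ZMod p,
      U * XZ ((0, b) : PV p n) = prodPow Mz b * U := by
    intro b
    apply matrix_col_ext
    intro u
    rw [← Matrix.mulVec_mulVec, ← Matrix.mulVec_mulVec, XZ_Z_mulVec_delta,
      Matrix.mulVec_smul, hUdef, Matrix.mulVec_mulVec, key b u,
      Matrix.smul_mulVec, ← Matrix.mulVec_mulVec, F0 b]
  -- splitting XZ v
  intro j v
  have hsplit : XZ ((v.1, 0) : PV p n) * XZ ((0, v.2) : PV p n) = XZ v := by
    rw [XZ_mul]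
    have : (∑ i, ((v.1, (0 : Fin n → ZMod p)).2 i
        * (((0 : Fin n → ZMod p), v.2)).1 i)) = 0 := by
      simp
    rw [this, ZMod.val_zero, pow_zero, one_smul]
    congr 1
    simp [Prod.ext_iff]
  obtain ⟨m1, h1⟩ := prodPow_structure θx η hθx v.1
  obtain ⟨m2, h2⟩ := prodPow_structure θz ξ hθz v.2
  rw [← hMxdef] at h1
  rw [← hMzdef] at h2
  obtain ⟨m3, h3⟩ := pauli_mul h1 h2
  have hUXZ : U * XZ v
      = omg p ^ m3 • (XZ ((∑ i, v.1 i • η i) + ∑ i, v.2 i • ξ i) * U) := by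
    rw [← hsplit, ← mul_assoc, F1, mul_assoc, F2, ← mul_assoc, h3, Matrix.smul_mul]
  refine ⟨j + m3, (∑ i, v.1 i • η i) + ∑ i, v.2 i • ξ i, ?_⟩
  rw [Matrix.mul_smul, Matrix.smul_mul, hUXZ, Matrix.smul_mul, smul_smul,
    mul_assoc, hU.1, mul_one, ← pow_add]
end

section
/- Let p be a prime and n ≥ 1. The number of hyperbolic bases of (ZMod p)^{2n}, i.e., of ordered 2n-tuples (x_1,…,x_n,y_1,…,y_n) of vectors of (ZMod p)^{2n} satisfying ⟨x_i,y_j⟩ = δ_{ij}, ⟨x_i,x_j⟩ = 0 and ⟨y_i,y_j⟩ = 0 for all i,j, equals p^{n²} · Π_{i=1}^{n} (p^{2i} − 1). (This is the order of the symplectic group Sp_{2n}(ZMod p).) -/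
open scoped BigOperators

section Aux


open LinearMap (BilinForm)
open Module

variable {p : ℕ} [Fact p.Prime]

section Abstract

variable {V : Type} [AddCommGroup V] [Module (ZMod p) V]

abbrev HypSet (B : BilinForm (ZMod p) V) (m : ℕ) : Type :=
  {xy : (Fin m → V) × (Fin m → V) //
      (∀ i j, B (xy.1 i) (xy.2 j) = if i = j then 1 else 0) ∧
      (∀ i j, B (xy.1 i) (xy.1 j) = 0) ∧
      (∀ i j, B (xy.2 i) (xy.2 j) = 0)}

abbrev orthoPair (B : BilinForm (ZMod p) V) (z : V × V) : Submodule (ZMod p) V :=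
  B.orthogonal (Submodule.span (ZMod p) {z.1, z.2})

lemma mem_ortho_pair {B : BilinForm (ZMod p) V} {x y v : V}
    (hx : B x v = 0) (hy : B y v = 0) : v ∈ orthoPair B (x, y) := by
  intro w hw
  obtain ⟨a, b, rfl⟩ := Submodule.mem_span_pair.1 hw
  show B (a • x + b • y) v = 0
  simp [hx, hy]

def hypCons (B : BilinForm (ZMod p) V) (hB : B.IsAlt) {m : ℕ}
    (s : Σ z : {z : V × V // B z.1 z.2 = 1}, HypSet (B.restrict (orthoPair B z.1)) m) :
    HypSet B (m + 1) := by
  refine ⟨(Fin.cons s.1.1.1 (fun i => (s.2.1.1 i : V)),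
           Fin.cons s.1.1.2 (fun i => (s.2.1.2 i : V))), ?_, ?_, ?_⟩
  · intro i j
    refine Fin.cases ?_ (fun i => ?_) i <;> refine Fin.cases ?_ (fun j => ?_) j <;>
      simp only [Fin.cons_succ, Fin.cons_zero]
    · simpa using s.1.2
    · rw [if_neg (Fin.succ_ne_zero j).symm]
      exact (s.2.1.2 j).2 _ (Submodule.subset_span (by simp))
    · rw [if_neg (Fin.succ_ne_zero i)]
      exact hB.isRefl _ _ ((s.2.1.1 i).2 _ (Submodule.subset_span (by simp)))
    · simpa [Fin.succ_inj] using s.2.2.1 i j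
  · intro i j
    refine Fin.cases ?_ (fun i => ?_) i <;> refine Fin.cases ?_ (fun j => ?_) j <;>
      simp only [Fin.cons_succ, Fin.cons_zero]
    · exact hB.self_eq_zero _
    · exact (s.2.1.1 j).2 _ (Submodule.subset_span (by simp))
    · exact hB.isRefl _ _ ((s.2.1.1 i).2 _ (Submodule.subset_span (by simp)))
    · exact s.2.2.2.1 i j
  · intro i j
    refine Fin.cases ?_ (fun i => ?_) i <;> refine Fin.cases ?_ (fun j => ?_) j <;>
      simp only [Fin.cons_succ, Fin.cons_zero]
    · exact hB.self_eq_zero _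
    · exact (s.2.1.2 j).2 _ (Submodule.subset_span (by simp))
    · exact hB.isRefl _ _ ((s.2.1.2 i).2 _ (Submodule.subset_span (by simp)))
    · exact s.2.2.2.2 i j

lemma hypCons_bijective (B : BilinForm (ZMod p) V) (hB : B.IsAlt) (m : ℕ) :
    Function.Bijective (hypCons B hB (m := m)) := by
  constructor
  · rintro ⟨⟨⟨x, y⟩, hz⟩, w⟩ ⟨⟨⟨x', y'⟩, hz'⟩, w'⟩ h
    have hval := congrArg Subtype.val h
    have h1 := congrArg Prod.fst hval
    have h2 := congrArg Prod.snd hval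
    have hx : x = x' := by simpa [hypCons] using congrFun h1 0
    have hy : y = y' := by simpa [hypCons] using congrFun h2 0
    subst hx; subst hy
    have hw : w = w' := by
      refine Subtype.ext (Prod.ext ?_ ?_) <;> funext i <;> refine Subtype.ext ?_
      · simpa [hypCons, Fin.cons_succ] using congrFun h1 i.succ
      · simpa [hypCons, Fin.cons_succ] using congrFun h2 i.succ
    subst hw
    rfl
  · intro t
    refine ⟨⟨⟨(t.1.1 0, t.1.2 0), by simpa using t.2.1 0 0⟩,
      ⟨(fun i => ⟨t.1.1 i.succ, mem_ortho_pair (t.2.2.1 0 i.succ) (hB.isRefl _ _ (by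
          rw [t.2.1 i.succ 0, if_neg (Fin.succ_ne_zero i)]))⟩,
       fun i => ⟨t.1.2 i.succ, mem_ortho_pair (by
          rw [t.2.1 0 i.succ, if_neg (Fin.succ_ne_zero i).symm]) (t.2.2.2 0 i.succ)⟩),
       ?_, ?_, ?_⟩⟩, ?_⟩
    · intro i j
      show B (t.1.1 i.succ) (t.1.2 j.succ) = _
      rw [t.2.1 i.succ j.succ]
      simp [Fin.succ_inj]
    · intro i j; exact t.2.2.1 i.succ j.succ
    · intro i j; exact t.2.2.2 i.succ j.succ
    · refine Subtype.ext (Prod.ext ?_ ?_) <;> exact Fin.cons_self_tail _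

section Count
variable (p) in
lemma card_module (M : Type*) [AddCommGroup M] [Module (ZMod p) M]
    [FiniteDimensional (ZMod p) M] :
    Nat.card M = p ^ finrank (ZMod p) M := by
  haveI : Finite M := Module.finite_of_finite (ZMod p)
  haveI : Fintype M := Fintype.ofFinite M
  rw [Nat.card_eq_fintype_card, Module.card_eq_pow_finrank (K := ZMod p), ZMod.card]

variable [FiniteDimensional (ZMod p) V]

lemma card_fiber_one {B : BilinForm (ZMod p) V} (hnd : B.Nondegenerate)
    {x : V} (hx : x ≠ 0) :
    Nat.card {y : V // B x y = 1} = p ^ (finrank (ZMod p) V - 1) := by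
  have hfne : B x ≠ 0 := by
    intro h
    exact hx (hnd.1 x (fun y => by rw [h]; rfl))
  have hrange : LinearMap.range (B x) = ⊤ := by
    rcases eq_bot_or_eq_top (LinearMap.range (B x)) with h | h
    · exact absurd (LinearMap.range_eq_bot.1 h) hfne
    · exact h
  obtain ⟨y0, hy0⟩ := LinearMap.range_eq_top.1 hrange 1
  have e : {y : V // B x y = 1} ≃ LinearMap.ker (B x) :=
    { toFun := fun y => ⟨y.1 - y0, by simp [LinearMap.mem_ker, y.2, hy0]⟩
      invFun := fun v => ⟨v.1 + y0, by
        have := v.2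
        simp only [LinearMap.mem_ker] at this
        simp [this, hy0]⟩
      left_inv := fun y => by ext; simp
      right_inv := fun v => by ext; simp }
  rw [Nat.card_congr e, card_module p]
  congr 1
  have h1 : finrank (ZMod p) (LinearMap.range (B x)) = 1 := by
    rw [hrange, finrank_top, finrank_self]
  have := LinearMap.finrank_range_add_finrank_ker (B x)
  omega

lemma card_pairs {B : BilinForm (ZMod p) V} (hnd : B.Nondegenerate) :
    Nat.card {z : V × V // B z.1 z.2 = 1} =
      (p ^ finrank (ZMod p) V - 1) * p ^ (finrank (ZMod p) V - 1) := by
  haveI : Finite V := Module.finite_of_finite (ZMod p)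
  haveI : Fintype V := Fintype.ofFinite V
  haveI := Classical.decEq V
  have e : {z : V × V // B z.1 z.2 = 1} ≃ Σ x : V, {y : V // B x y = 1} :=
    { toFun := fun z => ⟨z.1.1, z.1.2, z.2⟩
      invFun := fun s => ⟨(s.1, s.2.1), s.2.2⟩
      left_inv := fun z => rfl
      right_inv := fun s => rfl }
  haveI : ∀ x : V, Fintype {y : V // B x y = 1} := fun x => Fintype.ofFinite _
  rw [Nat.card_congr e, Nat.card_eq_fintype_card, Fintype.card_sigma]
  have h0 : Fintype.card {y : V // B (0 : V) y = 1} = 0 := by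
    rw [Fintype.card_eq_zero_iff]
    refine ⟨fun y => ?_⟩
    have : (0 : ZMod p) = 1 := by simpa using y.2.symm
    exact one_ne_zero this.symm
  calc ∑ x : V, Fintype.card {y : V // B x y = 1}
      = ∑ x ∈ Finset.univ.erase (0 : V), Fintype.card {y : V // B x y = 1} :=
        (Finset.sum_erase (f := fun x : V => Fintype.card {y : V // B x y = 1}) _ h0).symm
    _ = ∑ _x ∈ Finset.univ.erase (0 : V), p ^ (finrank (ZMod p) V - 1) :=
        Finset.sum_congr rfl (fun x hxm => by
          rw [← Nat.card_eq_fintype_card, card_fiber_one hnd (Finset.ne_of_mem_erase hxm)])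
    _ = (p ^ finrank (ZMod p) V - 1) * p ^ (finrank (ZMod p) V - 1) := by
        rw [Finset.sum_const, Finset.card_erase_of_mem (Finset.mem_univ _), Finset.card_univ,
          smul_eq_mul, ← Nat.card_eq_fintype_card, card_module p V]
end Count

section Geom
variable [FiniteDimensional (ZMod p) V] {B : BilinForm (ZMod p) V}

lemma finrank_span_pair_two (hB : B.IsAlt) {x y : V} (h1 : B x y = 1) :
    finrank (ZMod p) (Submodule.span (ZMod p) {x, y}) = 2 := by
  have hli : LinearIndependent (ZMod p) ![x, y] := by
    rw [LinearIndependent.pair_iff]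
    intro s t hst
    have h1' : B (s • x + t • y) y = 0 := by rw [hst]; simp
    have h2' : B x (s • x + t • y) = 0 := by rw [hst]; simp
    constructor
    · simpa [h1, hB.self_eq_zero, hB.self_eq_zero y] using h1'
    · simpa [h1, hB.self_eq_zero, hB.self_eq_zero x] using h2'
  have hr : ({x, y} : Set V) = Set.range ![x, y] := by
    ext v
    simp [Fin.exists_fin_two, eq_comm, or_comm]
  rw [hr, finrank_span_eq_card hli]
  simp

lemma ortho_facts (hB : B.IsAlt) (hnd : B.Nondegenerate) {x y : V} (h1 : B x y = 1) :
    (B.restrict (orthoPair B (x, y))).Nondegenerate ∧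
      finrank (ZMod p) (orthoPair B (x, y)) = finrank (ZMod p) V - 2 := by
  set U := Submodule.span (ZMod p) ({x, y} : Set V) with hU
  have hyx : B y x = -1 := by rw [← hB.neg_eq, h1]
  have hdisj : Disjoint U (B.orthogonal U) := by
    rw [Submodule.disjoint_def]
    intro v hvU hvO
    obtain ⟨a, b, rfl⟩ := Submodule.mem_span_pair.1 hvU
    have hx := hvO x (Submodule.subset_span (by simp))
    have hy := hvO y (Submodule.subset_span (by simp))
    simp only [LinearMap.BilinForm.IsOrtho, map_add, map_smul, LinearMap.add_apply,
      LinearMap.smul_apply, smul_eq_mul, h1, hyx, hB.self_eq_zero] at hx hy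
    have hb : b = 0 := by simpa using hx
    have ha : a = 0 := by
      rw [hb] at hy; simpa using hy
    simp [ha, hb]
  have horth : B.orthogonal (B.orthogonal U) = U :=
    LinearMap.BilinForm.orthogonal_orthogonal hnd hB.isRefl U
  constructor
  · exact B.nondegenerate_restrict_of_disjoint_orthogonal hB.isRefl (horth ▸ hdisj.symm)
  · rw [show orthoPair B (x, y) = B.orthogonal U from rfl,
      LinearMap.BilinForm.finrank_orthogonal hnd U, finrank_span_pair_two hB h1]

end Geom

theorem hyp_card (m : ℕ) :
    ∀ (V : Type) [AddCommGroup V] [Module (ZMod p) V]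
      [FiniteDimensional (ZMod p) V] (B : BilinForm (ZMod p) V),
      B.IsAlt → B.Nondegenerate → finrank (ZMod p) V = 2 * m →
      Nat.card (HypSet B m) =
        p ^ (m ^ 2) * ∏ i ∈ Finset.range m, (p ^ (2 * (i + 1)) - 1) := by
  induction m with
  | zero =>
    intro V _ _ _ B _ _ _
    haveI : Unique (HypSet B 0) :=
      { default := ⟨(fun i => i.elim0, fun i => i.elim0),
          fun i => i.elim0, fun i => i.elim0, fun i => i.elim0⟩
        uniq := fun t => Subtype.ext
          (Prod.ext (funext fun i => i.elim0) (funext fun i => i.elim0)) }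
    simp [Nat.card_unique]
  | succ m ih =>
    intro V _ _ _ B hB hnd hdim
    haveI : Finite V := Module.finite_of_finite (ZMod p)
    have hcard := Nat.card_eq_of_bijective _ (hypCons_bijective B hB m)
    rw [← hcard]
    have hfib : ∀ z : {z : V × V // B z.1 z.2 = 1},
        Nat.card (HypSet (B.restrict (orthoPair B z.1)) m) =
          p ^ (m ^ 2) * ∏ i ∈ Finset.range m, (p ^ (2 * (i + 1)) - 1) := by
      rintro ⟨⟨x, y⟩, hz⟩
      obtain ⟨hndR, hdimO⟩ := ortho_facts hB hnd hz
      exact ih _ (B.restrict (orthoPair B (x, y))) (fun w => hB w) hndR (by rw [hdimO, hdim]; omega)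
    have hsig : Nat.card (Σ z : {z : V × V // B z.1 z.2 = 1},
        HypSet (B.restrict (orthoPair B z.1)) m) =
        Nat.card {z : V × V // B z.1 z.2 = 1} *
          (p ^ (m ^ 2) * ∏ i ∈ Finset.range m, (p ^ (2 * (i + 1)) - 1)) := by
      haveI : Fintype {z : V × V // B z.1 z.2 = 1} := Fintype.ofFinite _
      haveI : ∀ z : {z : V × V // B z.1 z.2 = 1},
          Fintype (HypSet (B.restrict (orthoPair B z.1)) m) := fun z => Fintype.ofFinite _
      rw [Nat.card_eq_fintype_card, Fintype.card_sigma,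
        Finset.sum_congr rfl (fun z _ => by rw [← Nat.card_eq_fintype_card, hfib z]),
        Finset.sum_const, Finset.card_univ, smul_eq_mul, ← Nat.card_eq_fintype_card]
    rw [hsig, card_pairs hnd, hdim, Finset.prod_range_succ]
    have h2 : (m + 1) ^ 2 = (2 * (m + 1) - 1) + m ^ 2 := by
      have : 2 * (m + 1) - 1 = 2 * m + 1 := by omega
      rw [this]; ring
    rw [h2, pow_add]
    ring

end Abstract

/-- symp as a bilinear form. -/
def sympB (p n : ℕ) : LinearMap.BilinForm (ZMod p) (PV p n) :=
  LinearMap.mk₂ (ZMod p) symp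
    (fun x x' y => by
      simp only [symp, Prod.fst_add, Prod.snd_add, Pi.add_apply, ← Finset.sum_add_distrib]
      exact Finset.sum_congr rfl fun i _ => by ring)
    (fun c x y => by
      simp only [symp, Prod.smul_fst, Prod.smul_snd, Pi.smul_apply, smul_eq_mul,
        Finset.mul_sum]
      exact Finset.sum_congr rfl fun i _ => by ring)
    (fun x y y' => by
      simp only [symp, Prod.fst_add, Prod.snd_add, Pi.add_apply, ← Finset.sum_add_distrib]
      exact Finset.sum_congr rfl fun i _ => by ring)
    (fun c x y => by
      simp only [symp, Prod.smul_fst, Prod.smul_snd, Pi.smul_apply, smul_eq_mul,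
        Finset.mul_sum]
      exact Finset.sum_congr rfl fun i _ => by ring)

lemma sympB_apply {p n : ℕ} (x y : PV p n) : sympB p n x y = symp x y := rfl

lemma sympB_isAlt (p n : ℕ) : (sympB p n).IsAlt := fun x => by
  show symp x x = 0
  exact Finset.sum_eq_zero fun i _ => by ring

lemma sympB_nondegenerate (p n : ℕ) [Fact p.Prime] : (sympB p n).Nondegenerate := by
  refine (sympB_isAlt p n).isRefl.nondegenerate_iff_separatingLeft.2 ?_
  intro x hx
  have h1 : ∀ i, x.1 i = 0 := fun i => by
    have := hx (0, Pi.single i 1)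
    simp only [sympB_apply, symp, Pi.zero_apply, mul_zero, zero_sub, Pi.single_apply,
      mul_ite, mul_one, mul_zero, Finset.sum_neg_distrib, Finset.sum_ite_eq',
      Finset.mem_univ, if_true, neg_eq_zero] at this
    exact this
  have h2 : ∀ i, x.2 i = 0 := fun i => by
    have := hx (Pi.single i 1, 0)
    simp only [sympB_apply, symp, Pi.zero_apply, mul_zero, sub_zero, Pi.single_apply,
      mul_ite, mul_one, mul_zero, Finset.sum_ite_eq', Finset.mem_univ, if_true] at this
    exact this
  exact Prod.ext (funext h1) (funext h2)

lemma finrank_PV (p n : ℕ) [Fact p.Prime] :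
    Module.finrank (ZMod p) (PV p n) = 2 * n := by
  rw [Module.finrank_prod, Module.finrank_pi]
  simp [two_mul]

end Aux

/-- the number of hyperbolic bases of `(ZMod p)^{2n}` (2n-tuples
satisfying the hyperbolic relations) is `p^{n²} · ∏_{i=1}^n (p^{2i} - 1)`,
the order of `Sp_{2n}(ZMod p)`. -/
theorem stmt18 (p n : ℕ) [Fact p.Prime] (hn : 1 ≤ n) :
    Nat.card {xy : (Fin n → PV p n) × (Fin n → PV p n) //
      (∀ i j, symp (xy.1 i) (xy.2 j) = if i = j then 1 else 0) ∧
      (∀ i j, symp (xy.1 i) (xy.1 j) = 0) ∧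
      (∀ i j, symp (xy.2 i) (xy.2 j) = 0)} =
    p ^ (n ^ 2) * ∏ i ∈ Finset.range n, (p ^ (2 * (i + 1)) - 1) := by
  have h := hyp_card (p := p) n (PV p n) (sympB p n) (sympB_isAlt p n)
    (sympB_nondegenerate p n) (finrank_PV p n)
  exact h
end
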